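/- Let α ∈ [0,1), let f(α) = 20 if α ∈ [0,1/2], f(α) = 25 if α ∈ (1/2,5/7], and f(α) = 7/(1−α) + 3 if α ∈ (5/7,1). Let s ≥ 4 be an even integer and let n be an integer with n ≥ f(α) and n ≥ 5s/2 + 3. Then the A_α-spectral radius of G = K_s ∨ (K_{n−s−3s/2−1} ∪ (3s/2+1)K₁) satisfies ρ_α(G) < n − 3. -/

import Mathlib

set_option maxHeartbeats 1000000


open Finset

/-- The join `G ∨g H` of two graphs: the disjoint union together with all edges
between the two parts. -/
def SimpleGraph.gjoin {α β : Type*} (G : SimpleGraph α) (H : SimpleGraph β) :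
    SimpleGraph (α ⊕ β) where
  Adj u v := match u, v with
    | Sum.inl u, Sum.inl v => G.Adj u v
    | Sum.inr u, Sum.inr v => H.Adj u v
    | _, _ => True
  symm := ⟨fun u v => match u, v with
    | Sum.inl u, Sum.inl v => G.adj_symm
    | Sum.inr u, Sum.inr v => H.adj_symm
    | Sum.inl _, Sum.inr _ | Sum.inr _, Sum.inl _ => fun _ => trivial⟩
  loopless := ⟨fun u => by cases u <;> simp⟩

infixl:60 " ∨g " => SimpleGraph.gjoin

/-- The `A_α`-matrix `α • D(G) + (1-α) • A(G)` of a graph `G`. -/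
noncomputable def aAlphaMatrix {V : Type*} [Fintype V] [DecidableEq V]
    (α : ℝ) (G : SimpleGraph V) : Matrix V V ℝ := by
  classical
  exact α • Matrix.diagonal (fun v => (G.degree v : ℝ)) + (1 - α) • G.adjMatrix ℝ

/-- The `A_α`-spectral radius `ρ_α(G)`: the largest eigenvalue of `A_α(G)`. -/
noncomputable def rhoAlpha {V : Type*} [Fintype V] [DecidableEq V]
    (α : ℝ) (G : SimpleGraph V) : ℝ :=
  sSup (spectrum ℝ (aAlphaMatrix α G))

/-- The signless Laplacian matrix `Q(G) = D(G) + A(G)`. -/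
noncomputable def signlessLaplacian {V : Type*} [Fintype V] [DecidableEq V]
    (G : SimpleGraph V) : Matrix V V ℝ := by
  classical
  exact Matrix.diagonal (fun v => (G.degree v : ℝ)) + G.adjMatrix ℝ

/-- `q(G)`: the largest eigenvalue of the signless Laplacian matrix of `G`. -/
noncomputable def qIndex {V : Type*} [Fintype V] [DecidableEq V]
    (G : SimpleGraph V) : ℝ :=
  sSup (spectrum ℝ (signlessLaplacian G))

/-- The number of edges (the size) of a graph. -/
noncomputable def edgeCount {V : Type*} [Fintype V] [DecidableEq V]
    (G : SimpleGraph V) : ℕ := by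
  classical
  exact G.edgeFinset.card

/-- `i(G - S)`: the number of isolated vertices of the graph obtained from `G`
by deleting the vertices of `S` together with all edges incident to `S`. -/
noncomputable def isolGminus {V : Type*} [Fintype V] [DecidableEq V]
    (G : SimpleGraph V) (S : Finset V) : ℕ := by
  classical
  exact (Finset.univ.filter (fun v => v ∉ S ∧ ∀ u, G.Adj v u → u ∈ S)).card

/-- `F(n)`: the edge bound from Theorem 1.1. -/
def Fbound (n : ℕ) : ℕ :=
  if n = 6 then 9 else if n = 8 then 18 else (n - 2).choose 2 + 2

/-- `f(α)`: the order bound from Theorem 1.2. -/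
noncomputable def fAlpha (α : ℝ) : ℝ :=
  if α ≤ 1 / 2 then 20 else if α ≤ 5 / 7 then 25 else 7 / (1 - α) + 3

lemma spectrum_lt_of_mulVec_lt {V : Type*} [Fintype V] [DecidableEq V] [Nonempty V]
    (M : Matrix V V ℝ) (hM : ∀ i j, 0 ≤ M i j) (c : V → ℝ) (hc : ∀ i, 0 < c i)
    (t : ℝ) (ht : 0 < t) (hlt : ∀ i, M.mulVec c i < t * c i) :
    sSup (spectrum ℝ M) < t := by
  set t' : ℝ := univ.sup' univ_nonempty (fun i => M.mulVec c i / c i) with ht'def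
  have ht' : t' < t := by
    rw [ht'def, Finset.sup'_lt_iff]
    intro i _
    rw [div_lt_iff₀ (hc i)]
    exact hlt i
  have hMc : ∀ i, M.mulVec c i ≤ t' * c i := by
    intro i
    have h := Finset.le_sup' (fun i => M.mulVec c i / c i) (mem_univ i)
    rw [← ht'def] at h
    calc M.mulVec c i = M.mulVec c i / c i * c i := (div_mul_cancel₀ _ (hc i).ne').symm
      _ ≤ t' * c i := mul_le_mul_of_nonneg_right h (hc i).le
  have key : ∀ μ ∈ spectrum ℝ M, μ ≤ t' := by
    intro μ hμ
    rw [spectrum.mem_iff] at hμ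
    have hdet : (algebraMap ℝ (Matrix V V ℝ) μ - M).det = 0 := by
      by_contra h
      exact hμ ((Matrix.isUnit_iff_isUnit_det _).mpr (isUnit_iff_ne_zero.mpr h))
    obtain ⟨x, hx0, hxe⟩ := Matrix.exists_mulVec_eq_zero_iff.mpr hdet
    have h1 : (algebraMap ℝ (Matrix V V ℝ) μ).mulVec x = μ • x := by
      rw [Algebra.algebraMap_eq_smul_one, Matrix.smul_mulVec, Matrix.one_mulVec]
    have hMx : ∀ j, M.mulVec x j = μ * x j := by
      intro j
      have h2 := congrFun hxe j
      rw [Matrix.sub_mulVec, h1] at h2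
      have : μ • x j - M.mulVec x j = 0 := h2
      simp only [smul_eq_mul] at this
      linarith
    obtain ⟨i, _, hi⟩ := Finset.exists_max_image univ (fun j => |x j| / c j) univ_nonempty
    have hxi : 0 < |x i| := by
      obtain ⟨j, hj⟩ := Function.ne_iff.mp hx0
      have hj' : 0 < |x j| / c j := div_pos (abs_pos.mpr hj) (hc j)
      have h3 : 0 < |x i| / c i := lt_of_lt_of_le hj' (hi j (mem_univ j))
      calc 0 < |x i| / c i * c i := mul_pos h3 (hc i)
        _ = |x i| := div_mul_cancel₀ _ (hc i).ne'
    set r : ℝ := |x i| / c i with hrdef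
    have hr0 : 0 ≤ r := div_nonneg (abs_nonneg _) (hc i).le
    have hbound : ∀ j, |x j| ≤ r * c j := by
      intro j
      have h4 := hi j (mem_univ j)
      calc |x j| = |x j| / c j * c j := (div_mul_cancel₀ _ (hc j).ne').symm
        _ ≤ r * c j := mul_le_mul_of_nonneg_right h4 (hc j).le
    have hsum : M.mulVec x i = ∑ j, M i j * x j := by
      simp [Matrix.mulVec, dotProduct]
    have habs : |μ| * |x i| ≤ t' * |x i| := by
      calc |μ| * |x i| = |μ * x i| := (abs_mul μ (x i)).symm
        _ = |∑ j, M i j * x j| := by rw [← hMx i, hsum]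
        _ ≤ ∑ j, |M i j * x j| := Finset.abs_sum_le_sum_abs _ _
        _ = ∑ j, M i j * |x j| := by
            refine Finset.sum_congr rfl fun j _ => ?_
            rw [abs_mul, abs_of_nonneg (hM i j)]
        _ ≤ ∑ j, M i j * (r * c j) := by
            refine Finset.sum_le_sum fun j _ => ?_
            exact mul_le_mul_of_nonneg_left (hbound j) (hM i j)
        _ = r * ∑ j, M i j * c j := by
            rw [Finset.mul_sum]; refine Finset.sum_congr rfl fun j _ => by ring
        _ = r * M.mulVec c i := by
            have : M.mulVec c i = ∑ j, M i j * c j := by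
              simp [Matrix.mulVec, dotProduct]
            rw [this]
        _ ≤ r * (t' * c i) := mul_le_mul_of_nonneg_left (hMc i) hr0
        _ = t' * (r * c i) := by ring
        _ = t' * |x i| := by rw [hrdef, div_mul_cancel₀ _ (hc i).ne']
    have : |μ| ≤ t' := le_of_mul_le_mul_right habs hxi
    exact (le_abs_self μ).trans this
  rcases Set.eq_empty_or_nonempty (spectrum ℝ M) with h | h
  · rw [h, Real.sSup_empty]; exact ht
  · exact lt_of_le_of_lt (csSup_le h key) ht'

lemma gpos (b : ℝ) (hb0 : 0 < b) (hb1 : b ≤ 1) :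
    0 < 186/35 - 926/35*b + 38*b^2 - 8*b^3 := by
  nlinarith [sq_nonneg (b - 2/5), sq_nonneg (b - 1/2), mul_nonneg hb0.le (sq_nonneg (b - 2/5)),
    mul_nonneg (sub_nonneg.2 hb1) (sq_nonneg (b - 2/5)), mul_pos hb0 hb0,
    mul_nonneg (sub_nonneg.2 hb1) (sq_nonneg (b - 1/2))]

lemma keyP (b m n : ℝ) (hb0 : 0 < b) (hb1 : b ≤ 1) (hm : 2 ≤ m)
    (hn5 : 5*m+3 ≤ n) (hbn : 44/7 ≤ b*(n-3)) :
    0 < (b*(n-2*m)-2-b)*((4*b+1)*(2*b+3)) - 4*b^2*(n-5*m-1)*(2*b+3)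
        - 2*b^2*(3*m+1)*(4*b+1) := by
  have ht1 : 0 ≤ (2/5)*(b*((2*b+3)*(n-3-5*m))) := by
    have : (0:ℝ) ≤ n-3-5*m := by linarith
    positivity
  have ht2 : 0 ≤ (3/5)*((2*b+3)*(b*(n-3)-44/7)) := by
    have h1 : (0:ℝ) ≤ b*(n-3)-44/7 := by linarith
    positivity
  have ht3 : 0 ≤ 30*b^2*m + 12*b - 52*b^2 := by nlinarith [sq_nonneg b, mul_pos hb0 hb0]
  have hg := gpos b hb0 hb1
  nlinarith [ht1, ht2, ht3, hg]

lemma entryIneqs (b m n v w : ℝ) (hb0 : 0 < b) (hb1 : b ≤ 1) (hm : 2 ≤ m)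
    (hn5 : 5*m+3 ≤ n) (hbn : 44/7 ≤ b*(n-3))
    (hv : v = 2*b*m/(2*b*m + m - 1) + 1/n) (hw : w = 2*b*m/(2*b*m + (n-3-2*m)) + 1/n) :
    0 < v ∧ 0 < w ∧
    ((1-b)*(n-1) + b*((2*m-1) + (n-5*m-1)*v + (3*m+1)*w) < n-3) ∧
    ((1-b)*(n-3*m-2)*v + b*(2*m + (n-5*m-2)*v) < (n-3)*v) ∧
    ((1-b)*(2*m)*w + b*(2*m) < (n-3)*w) := by
  have hn0 : (0:ℝ) < n := by linarith
  have hD1 : (0:ℝ) < 2*b*m + m - 1 := by nlinarith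
  have hD2 : (0:ℝ) < 2*b*m + (n-3-2*m) := by nlinarith
  have hbm : (0:ℝ) < 2*b*m := by nlinarith
  have hv0 : 0 < v := by rw [hv]; positivity
  have hw0 : 0 < w := by rw [hw]; positivity
  have hvD : 2*b*m < v * (2*b*m + m - 1) := by
    rw [hv, add_mul, div_mul_cancel₀ _ hD1.ne']
    nlinarith [mul_pos (one_div_pos.mpr hn0) hD1]
  have hwD : 2*b*m < w * (2*b*m + (n-3-2*m)) := by
    rw [hw, add_mul, div_mul_cancel₀ _ hD2.ne']
    nlinarith [mul_pos (one_div_pos.mpr hn0) hD2]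
  refine ⟨hv0, hw0, ?_, ?_, ?_⟩
  · -- inequality for vertices in S
    have h4b : (0:ℝ) < 4*b+1 := by linarith
    have h2b : (0:ℝ) < 2*b+3 := by linarith
    have hv2 : v ≤ 4*b/(4*b+1) + 1/n := by
      rw [hv]
      have : 2*b*m/(2*b*m + m - 1) ≤ 4*b/(4*b+1) := by
        rw [div_le_div_iff₀ hD1 h4b]
        nlinarith
      linarith
    have hw2 : w ≤ 2*b/(2*b+3) + 1/n := by
      rw [hw]
      have : 2*b*m/(2*b*m + (n-3-2*m)) ≤ 2*b/(2*b+3) := by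
        rw [div_le_div_iff₀ hD2 h2b]
        nlinarith
      linarith
    have ha0 : (0:ℝ) ≤ b*(n-5*m-1) := by nlinarith
    have hb'0 : (0:ℝ) ≤ b*(3*m+1) := by nlinarith
    have step : (1-b)*(n-1) + b*((2*m-1) + (n-5*m-1)*v + (3*m+1)*w)
        ≤ (1-b)*(n-1) + b*(2*m-1) + b*(n-5*m-1)*(4*b/(4*b+1)) + b*(3*m+1)*(2*b/(2*b+3))
          + b*(n-2*m)*(1/n) := by
      have e1 : b*(n-5*m-1)*v ≤ b*(n-5*m-1)*(4*b/(4*b+1) + 1/n) :=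
        mul_le_mul_of_nonneg_left hv2 ha0
      have e2 : b*(3*m+1)*w ≤ b*(3*m+1)*(2*b/(2*b+3) + 1/n) :=
        mul_le_mul_of_nonneg_left hw2 hb'0
      nlinarith [e1, e2]
    have hfin : (1-b)*(n-1) + b*(2*m-1) + b*(n-5*m-1)*(4*b/(4*b+1)) + b*(3*m+1)*(2*b/(2*b+3))
          + b*(n-2*m)*(1/n) < n-3 := by
      have hP := keyP b m n hb0 hb1 hm hn5 hbn
      have hnm : b*(n-2*m)*(1/n) ≤ b := by
        rw [mul_one_div, div_le_iff₀ hn0]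
        nlinarith
      have hK : (0:ℝ) < (4*b+1)*(2*b+3) := mul_pos h4b h2b
      have hfrac : b*(n-5*m-1)*(4*b/(4*b+1)) + b*(3*m+1)*(2*b/(2*b+3))
          = (4*b^2*(n-5*m-1)*(2*b+3) + 2*b^2*(3*m+1)*(4*b+1))/((4*b+1)*(2*b+3)) := by
        field_simp
      have hsum : b*(n-5*m-1)*(4*b/(4*b+1)) + b*(3*m+1)*(2*b/(2*b+3))
          < b*(n-2*m) - 2 - b := by
        rw [hfrac, div_lt_iff₀ hK]
        nlinarith [hP]
      linarith [hsum, hnm]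
    linarith [step, hfin]
  · nlinarith [hvD, mul_pos hv0 hbm]
  · nlinarith [hwD]

lemma sum_ite_ne {γ : Type*} [Fintype γ] [DecidableEq γ] (i : γ) (t : ℝ) :
    (∑ j : γ, if i = j then (0:ℝ) else t) = (Fintype.card γ) * t - t := by
  have h : ∀ j : γ, (if i = j then (0:ℝ) else t) = t - (if i = j then t else 0) := by
    intro j; split <;> ring
  simp_rw [h, Finset.sum_sub_distrib, Finset.sum_ite_eq, Finset.sum_const]
  simp [mul_comm]



lemma aAlpha_entries_nonneg {V : Type*} [Fintype V] [DecidableEq V]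
    (α : ℝ) (h0 : 0 ≤ α) (h1 : α ≤ 1) (G : SimpleGraph V) :
    ∀ i j, 0 ≤ aAlphaMatrix α G i j := by
  classical
  intro i j
  simp only [aAlphaMatrix, Matrix.add_apply, Matrix.smul_apply, smul_eq_mul,
    Matrix.diagonal_apply, SimpleGraph.adjMatrix_apply]
  have hd : (0:ℝ) ≤ (G.degree i : ℝ) := Nat.cast_nonneg _
  split_ifs <;> nlinarith [hd]

abbrev Gr (s A B : ℕ) : SimpleGraph (Fin s ⊕ (Fin A ⊕ Fin B)) :=
  (⊤ : SimpleGraph (Fin s)) ∨g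
    ((⊤ : SimpleGraph (Fin A)) ⊕g (⊥ : SimpleGraph (Fin B)))


lemma mulVec_Gr (s A B : ℕ) (α u v w : ℝ)
    (c : (Fin s ⊕ (Fin A ⊕ Fin B)) → ℝ)
    (hc : c = Sum.elim (fun _ => u) (Sum.elim (fun _ => v) (fun _ => w))) :
    ∀ x, (aAlphaMatrix α (Gr s A B)).mulVec c x =
      Sum.elim (fun _ => α * (((s:ℝ)-1) + A + B) * u + (1-α)*(((s:ℝ)-1)*u + A*v + B*w))
        (Sum.elim (fun _ => α * ((s:ℝ) + A - 1) * v + (1-α)*((s:ℝ)*u + ((A:ℝ)-1)*v))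
          (fun _ => α * (s:ℝ) * w + (1-α)*((s:ℝ)*u))) x := by
  classical
  have hexp : ∀ x, (aAlphaMatrix α (Gr s A B)).mulVec c x =
      α * (((Gr s A B).degree x : ℝ) * c x)
        + (1-α) * ∑ y, (if (Gr s A B).Adj x y then c y else 0) := by
    intro x
    simp only [aAlphaMatrix, Matrix.add_mulVec, Matrix.smul_mulVec,
      Pi.add_apply, Pi.smul_apply, smul_eq_mul, Matrix.mulVec_diagonal,
      SimpleGraph.adjMatrix_mulVec_apply]
    rw [SimpleGraph.neighborFinset_eq_filter, Finset.sum_filter]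
  have hdeg : ∀ x, ((Gr s A B).degree x : ℝ) =
      ∑ y, (if (Gr s A B).Adj x y then (1:ℝ) else 0) := by
    intro x
    rw [Finset.sum_boole]
    norm_cast
    rw [SimpleGraph.degree, SimpleGraph.neighborFinset_eq_filter]
  -- generic sum evaluation
  have hgenS : ∀ (i : Fin s) (f : (Fin s ⊕ (Fin A ⊕ Fin B)) → ℝ)
      (u' v' w' : ℝ) (hf : f = Sum.elim (fun _ => u') (Sum.elim (fun _ => v') (fun _ => w'))),
      (∑ y, if (Gr s A B).Adj (Sum.inl i) y then f y else 0)
        = ((s:ℝ)*u' - u') + ((A:ℝ)*v' + (B:ℝ)*w') := by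
    intro i f u' v' w' hf
    rw [Fintype.sum_sum_type, Fintype.sum_sum_type]
    subst hf
    simp only [SimpleGraph.gjoin, Sum.elim_inl, Sum.elim_inr, SimpleGraph.top_adj,
      if_true, ite_not]
    rw [sum_ite_ne i u']
    simp [mul_comm]
  have hgenC : ∀ (i : Fin A) (f : (Fin s ⊕ (Fin A ⊕ Fin B)) → ℝ)
      (u' v' w' : ℝ) (hf : f = Sum.elim (fun _ => u') (Sum.elim (fun _ => v') (fun _ => w'))),
      (∑ y, if (Gr s A B).Adj (Sum.inr (Sum.inl i)) y then f y else 0)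
        = (s:ℝ)*u' + ((A:ℝ)*v' - v') := by
    intro i f u' v' w' hf
    rw [Fintype.sum_sum_type, Fintype.sum_sum_type]
    subst hf
    simp only [SimpleGraph.gjoin, Sum.elim_inl, Sum.elim_inr, SimpleGraph.sum_adj,
      SimpleGraph.top_adj, SimpleGraph.bot_adj, if_true, if_false, ite_not]
    rw [sum_ite_ne i v']
    simp [mul_comm]
  have hgenI : ∀ (i : Fin B) (f : (Fin s ⊕ (Fin A ⊕ Fin B)) → ℝ)
      (u' v' w' : ℝ) (hf : f = Sum.elim (fun _ => u') (Sum.elim (fun _ => v') (fun _ => w'))),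
      (∑ y, if (Gr s A B).Adj (Sum.inr (Sum.inr i)) y then f y else 0)
        = (s:ℝ)*u' := by
    intro i f u' v' w' hf
    rw [Fintype.sum_sum_type, Fintype.sum_sum_type]
    subst hf
    simp only [SimpleGraph.gjoin, Sum.elim_inl, Sum.elim_inr, SimpleGraph.sum_adj,
      SimpleGraph.top_adj, SimpleGraph.bot_adj, if_true, if_false]
    simp [mul_comm]
  intro x
  have hone : (fun (_ : Fin s) => (1:ℝ)) = fun _ => (1:ℝ) := rfl
  cases x with
  | inl i =>
    rw [hexp, hdeg, hgenS i _ 1 1 1 (by funext y; cases y with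
        | inl _ => rfl
        | inr y' => cases y' <;> rfl),
      hgenS i c u v w hc]
    simp only [hc, Sum.elim_inl]
    push_cast
    ring
  | inr x' =>
    cases x' with
    | inl i =>
      rw [hexp, hdeg, hgenC i _ 1 1 1 (by funext y; cases y with
          | inl _ => rfl
          | inr y' => cases y' <;> rfl),
        hgenC i c u v w hc]
      simp only [hc, Sum.elim_inr, Sum.elim_inl]
      push_cast
      ring
    | inr i =>
      rw [hexp, hdeg, hgenI i _ 1 1 1 (by funext y; cases y with
          | inl _ => rfl
          | inr y' => cases y' <;> rfl),
        hgenI i c u v w hc]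
      simp only [hc, Sum.elim_inr]
      push_cast
      ring

theorem rhoAlpha_case1_even_lt (α : ℝ) (hα0 : 0 ≤ α) (hα1 : α < 1)
    (s n : ℕ) (heven : Even s) (hs : 4 ≤ s) (hfn : fAlpha α ≤ (n : ℝ))
    (hn : 5 * s / 2 + 3 ≤ n) :
    rhoAlpha α ((⊤ : SimpleGraph (Fin s)) ∨g
        ((⊤ : SimpleGraph (Fin (n - s - 3 * s / 2 - 1))) ⊕g
          (⊥ : SimpleGraph (Fin (3 * s / 2 + 1)))))
      < (n : ℝ) - 3 := by
  classical
  obtain ⟨k, hk⟩ := heven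
  set A := n - s - 3 * s / 2 - 1 with hAdef
  set B := 3 * s / 2 + 1 with hBdef
  have hk2 : 2 ≤ k := by omega
  have hAn : A + 5*k + 1 = n := by omega
  have hBk : B = 3*k+1 := by omega
  set b : ℝ := 1 - α with hbdef
  have hb0 : 0 < b := by rw [hbdef]; linarith
  have hb1 : b ≤ 1 := by rw [hbdef]; linarith
  set rm : ℝ := (k:ℝ) with hrmdef
  have hm : 2 ≤ rm := by rw [hrmdef]; exact_mod_cast hk2
  have hsr : (s:ℝ) = 2*rm := by rw [hk, hrmdef]; push_cast; ring
  have hAr : (A:ℝ) = (n:ℝ) - 5*rm - 1 := by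
    have h := congrArg (Nat.cast (R := ℝ)) hAn
    push_cast at h
    rw [hrmdef]; linarith
  have hBr : (B:ℝ) = 3*rm+1 := by rw [hBk, hrmdef]; push_cast; ring
  have hn5 : 5*rm+3 ≤ (n:ℝ) := by
    have h : 5*k+3 ≤ n := by omega
    rw [hrmdef]; exact_mod_cast h
  have hbn : 44/7 ≤ b*((n:ℝ)-3) := by
    rw [fAlpha] at hfn
    split_ifs at hfn with h1 h2
    · have hb12 : (1:ℝ)/2 ≤ b := by rw [hbdef]; linarith
      nlinarith
    · have hb27 : (2:ℝ)/7 ≤ b := by rw [hbdef]; linarith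
      nlinarith
    · have h3 : 7/b + 3 ≤ (n:ℝ) := by rw [hbdef]; linarith
      have h4 : 7/b ≤ (n:ℝ) - 3 := by linarith
      rw [div_le_iff₀ hb0] at h4
      nlinarith
  have hn3 : (0:ℝ) < (n:ℝ) - 3 := by nlinarith
  set v : ℝ := 2*b*rm/(2*b*rm + rm - 1) + 1/(n:ℝ) with hvdef
  set w : ℝ := 2*b*rm/(2*b*rm + ((n:ℝ)-3-2*rm)) + 1/(n:ℝ) with hwdef
  obtain ⟨hv0, hw0, hI1, hI2, hI3⟩ :=
    entryIneqs b rm (n:ℝ) v w hb0 hb1 hm hn5 hbn hvdef hwdef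
  haveI : Nonempty (Fin s ⊕ (Fin A ⊕ Fin B)) := ⟨Sum.inl ⟨0, by omega⟩⟩
  rw [rhoAlpha]
  set c : (Fin s ⊕ (Fin A ⊕ Fin B)) → ℝ :=
    Sum.elim (fun _ => (1:ℝ)) (Sum.elim (fun _ => v) (fun _ => w)) with hcdef
  have hc : ∀ i, 0 < c i := by
    intro i
    cases i with
    | inl _ => simp [hcdef]
    | inr i' => cases i' <;> simp [hcdef, hv0, hw0]
  apply spectrum_lt_of_mulVec_lt _ (aAlpha_entries_nonneg α hα0 hα1.le _) c hc _ hn3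
  intro x
  rw [mulVec_Gr s A B α 1 v w c hcdef x]
  have hab : α = 1 - b := by rw [hbdef]; ring
  cases x with
  | inl i =>
    simp only [Sum.elim_inl, hcdef]
    rw [hsr, hAr, hBr, hab]
    nlinarith [hI1]
  | inr x' =>
    cases x' with
    | inl i =>
      simp only [Sum.elim_inr, Sum.elim_inl, hcdef]
      rw [hsr, hAr, hab]
      nlinarith [hI2]
    | inr i =>
      simp only [Sum.elim_inr, hcdef]
      rw [hsr, hab]
      nlinarith [hI3]
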